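/- Lemma of homological algebra: Let (A,∂) be a chain complex in an abelian category with an increasing filtration {F_pA} of subcomplexes such that each A_n is the union of F_pA_n, each F_pA_n vanishes for p sufficiently small, and H_q(gr^F_p A) = 0 for all q ≠ p. Define P_n = ker(F_nA_n → gr^F_n A_{n−1}) and Q_n = ∂(F_nA_{n+1}) + F_{n−1}A_n. Then Q ⊂ P ⊂ A are subcomplexes, the quotient P/Q is the complex ... → H_{n+1}(gr^F_{n+1}A) → H_n(gr^F_n A) → H_{n−1}(gr^F_{n−1}A) → ..., and both maps P → A and P → P/Q are quasi-isomorphisms. -/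
import Mathlib


/-- Lemma of homological algebra.  Let `(A,∂)` be a chain complex of modules (written
with `d n : A (n+1) → A n`) with an increasing filtration `F` by subcomplexes which is
exhaustive, bounded below in each degree, and such that `H_q(gr^F_p A) = 0` for
`q ≠ p`.  Define `P_n = ker(F_nA_n → gr^F_n A_{n−1})` and
`Q_n = ∂(F_nA_{n+1}) + F_{n−1}A_n`.  Then `Q ⊆ P ⊆ A` are subcomplexes, `Q` is
acyclic (equivalently, `P → P/Q` — the familiar complex of homologies of the graded
pieces — is a quasi-isomorphism), and `P → A` is a quasi-isomorphism. -/
theorem stmt17 {R : Type*} [Ring R] (A : ℤ → Type*)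
    [∀ n, AddCommGroup (A n)] [∀ n, Module R (A n)]
    (d : ∀ n : ℤ, A (n + 1) →ₗ[R] A n)
    (hdd : ∀ (n : ℤ) (x : A (n + 1 + 1)), d n (d (n + 1) x) = 0)
    (F : ℤ → ∀ n : ℤ, Submodule R (A n))
    (hmono : ∀ p q n, p ≤ q → F p n ≤ F q n)
    (hFsub : ∀ (p n : ℤ), ∀ x ∈ F p (n + 1), d n x ∈ F p n)
    (hexh : ∀ (n : ℤ) (x : A n), ∃ p, x ∈ F p n)
    (hbdd : ∀ n : ℤ, ∃ p, F p n = ⊥)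
    (hgr : ∀ (p n : ℤ), n + 1 ≠ p → ∀ x ∈ F p (n + 1), d n x ∈ F (p - 1) n →
      ∃ y ∈ F p (n + 1 + 1), ∃ z ∈ F (p - 1) (n + 1), x = d (n + 1) y + z) :
    ∀ P Q : ∀ n : ℤ, Submodule R (A (n + 1)),
      (∀ n : ℤ, P n = F (n + 1) (n + 1) ⊓ (F n n).comap (d n)) →
      (∀ n : ℤ, Q n = (F (n + 1) (n + 1 + 1)).map (d (n + 1)) ⊔ F n (n + 1)) →
      -- Q ⊆ P
      (∀ n : ℤ, Q n ≤ P n) ∧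
      -- P and Q are subcomplexes
      (∀ n : ℤ, ∀ x ∈ P (n + 1), d (n + 1) x ∈ P n) ∧
      (∀ n : ℤ, ∀ x ∈ Q (n + 1), d (n + 1) x ∈ Q n) ∧
      -- Q is acyclic, hence P → P/Q is a quasi-isomorphism
      (∀ n : ℤ, ∀ x ∈ Q n, d n x = 0 → ∃ y ∈ Q (n + 1), d (n + 1) y = x) ∧
      -- P → A is a quasi-isomorphism: surjectivity on homology ...
      (∀ (n : ℤ) (y : A (n + 1)), d n y = 0 →
        ∃ x ∈ P n, d n x = 0 ∧ ∃ z : A (n + 1 + 1), d (n + 1) z = y - x) ∧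
      -- ... and injectivity on homology
      (∀ n : ℤ, ∀ x ∈ P n, d n x = 0 →
        (∃ z : A (n + 1 + 1), d (n + 1) z = x) →
        ∃ w ∈ P (n + 1), d (n + 1) w = x) := by
  intro P Q hP hQ
  -- membership characterizations
  have hP' : ∀ (n : ℤ) (x : A (n+1)), x ∈ P n ↔ x ∈ F (n+1) (n+1) ∧ d n x ∈ F n n := by
    intro n x
    rw [hP]
    simp [Submodule.mem_inf, Submodule.mem_comap]
  have hQ' : ∀ (n : ℤ) (x : A (n+1)),
      x ∈ Q n ↔ ∃ y ∈ F (n+1) (n+1+1), ∃ z ∈ F n (n+1), d (n+1) y + z = x := by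
    intro n x
    rw [hQ, Submodule.mem_sup]
    constructor
    · rintro ⟨a, ha, z, hz, h⟩
      obtain ⟨y, hy, rfl⟩ := Submodule.mem_map.mp ha
      exact ⟨y, hy, z, hz, h⟩
    · rintro ⟨y, hy, z, hz, h⟩
      exact ⟨d (n+1) y, Submodule.mem_map_of_mem hy, z, hz, h⟩
  -- L1: below the critical index, cycles in F p are boundaries from F p
  have L1 : ∀ (n : ℤ) (k : ℕ) (p : ℤ), p ≤ n → ∀ z ∈ F p (n+1), F (p - (k:ℤ)) (n+1) = ⊥ →
      d n z = 0 → ∃ w ∈ F p (n+1+1), d (n+1) w = z := by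
    intro n k
    induction k with
    | zero =>
      intro p hp z hz hbot hdz
      simp only [Nat.cast_zero, sub_zero] at hbot
      rw [hbot, Submodule.mem_bot] at hz
      exact ⟨0, (F p (n+1+1)).zero_mem, by rw [map_zero, hz]⟩
    | succ k ih =>
      intro p hp z hz hbot hdz
      obtain ⟨y, hy, z', hz', hzeq⟩ := hgr p n (by omega) z hz
        (by rw [hdz]; exact (F (p-1) n).zero_mem)
      have hdz' : d n z' = 0 := by
        have h := congrArg (d n) hzeq
        rw [map_add, hdd, zero_add, hdz] at h
        exact h.symm
      obtain ⟨w, hw, hdw⟩ := ih (p-1) (by omega) z' hz'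
        (by rw [show p - 1 - (k:ℤ) = p - ((k+1:ℕ):ℤ) by push_cast; ring]; exact hbot) hdz'
      refine ⟨y + w, (F p (n+1+1)).add_mem hy (hmono _ _ _ (by omega) hw), ?_⟩
      rw [map_add, hdw]
      exact hzeq.symm
  -- L2: surjectivity on homology, by downward induction on the filtration index
  have L2 : ∀ (n : ℤ) (k : ℕ), ∀ y ∈ F (n+1+(k:ℤ)) (n+1), d n y = 0 →
      ∃ x ∈ F (n+1) (n+1), d n x = 0 ∧ ∃ z : A (n+1+1), d (n+1) z = y - x := by
    intro n k
    induction k with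
    | zero =>
      intro y hy hdy
      exact ⟨y, by simpa using hy, hdy, 0, by simp⟩
    | succ k ih =>
      intro y hy hdy
      obtain ⟨w, hw, z, hz, heq⟩ := hgr (n+1+((k+1:ℕ):ℤ)) n (by push_cast; omega) y hy
        (by rw [hdy]; exact Submodule.zero_mem _)
      have hdz : d n z = 0 := by
        have h := congrArg (d n) heq
        rw [map_add, hdd, zero_add, hdy] at h
        exact h.symm
      obtain ⟨x, hx, hdx, z', hz'⟩ := ih z (hmono _ _ _ (by push_cast; omega) hz) hdz
      refine ⟨x, hx, hdx, w + z', ?_⟩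
      rw [map_add, hz', heq]
      abel
  -- L3: injectivity on homology, by downward induction on the filtration index
  have L3 : ∀ (n : ℤ) (x : A (n+1)), x ∈ F (n+1) (n+1) →
      ∀ (k : ℕ), ∀ z ∈ F (n+1+1+(k:ℤ)) (n+1+1), d (n+1) z = x →
      ∃ w ∈ F (n+1+1) (n+1+1), d (n+1) w = x := by
    intro n x hx k
    induction k with
    | zero =>
      intro z hz hdz
      exact ⟨z, by simpa using hz, hdz⟩
    | succ k ih =>
      intro z hz hdz
      obtain ⟨u, hu, z', hz', heq⟩ := hgr (n+1+1+((k+1:ℕ):ℤ)) (n+1) (by push_cast; omega) z hz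
        (by rw [hdz]; exact hmono _ _ _ (by push_cast; omega) hx)
      have hdz' : d (n+1) z' = x := by
        have h := congrArg (d (n+1)) heq
        rw [map_add, hdd, zero_add, hdz] at h
        exact h.symm
      exact ih z' (hmono _ _ _ (by push_cast; omega) hz') hdz'
  refine ⟨?_, ?_, ?_, ?_, ?_, ?_⟩
  · -- Q ⊆ P
    intro n x hx
    obtain ⟨y, hy, z, hz, heq⟩ := (hQ' n x).mp hx
    rw [hP' n x]
    constructor
    · rw [← heq]
      exact (F (n+1) (n+1)).add_mem (hFsub (n+1) (n+1) y hy) (hmono _ _ _ (by omega) hz)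
    · rw [← heq, map_add, hdd, zero_add]
      exact hFsub n n z hz
  · -- P is a subcomplex
    intro n x hx
    obtain ⟨h1, h2⟩ := (hP' (n+1) x).mp hx
    rw [hP' n]
    exact ⟨h2, by rw [hdd]; exact (F n n).zero_mem⟩
  · -- Q is a subcomplex
    intro n x hx
    obtain ⟨y, hy, z, hz, heq⟩ := (hQ' (n+1) x).mp hx
    rw [hQ' n]
    refine ⟨z, hz, 0, (F n (n+1)).zero_mem, ?_⟩
    rw [add_zero, ← heq, map_add, hdd, zero_add]
  · -- Q is acyclic
    intro n x hx hdx
    obtain ⟨y, hy, z, hz, heq⟩ := (hQ' n x).mp hx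
    have hdz : d n z = 0 := by
      have h := congrArg (d n) heq
      rw [map_add, hdd, zero_add, hdx] at h
      exact h
    obtain ⟨p₀, hp₀⟩ := hbdd (n+1)
    obtain ⟨w, hw, hdw⟩ := L1 n (n - p₀).toNat n le_rfl z hz
      (le_bot_iff.mp (by rw [← hp₀]; exact hmono _ _ _ (by omega) )) hdz
    refine ⟨y + w, ?_, by rw [map_add, hdw]; exact heq⟩
    rw [hQ' (n+1)]
    exact ⟨0, (F (n+1+1) (n+1+1+1)).zero_mem, y + w,
      (F (n+1) (n+1+1)).add_mem hy (hmono _ _ _ (by omega) hw), by rw [map_zero, zero_add]⟩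
  · -- P → A surjective on homology
    intro n y hdy
    obtain ⟨p, hp⟩ := hexh (n+1) y
    obtain ⟨x, hx, hdx, z, hz⟩ := L2 n (p - (n+1)).toNat
      y (hmono _ _ _ (by omega) hp) hdy
    refine ⟨x, ?_, hdx, z, hz⟩
    rw [hP' n]
    exact ⟨hx, by rw [hdx]; exact (F n n).zero_mem⟩
  · -- P → A injective on homology
    rintro n x hx hdx ⟨z, hz⟩
    obtain ⟨hx1, hx2⟩ := (hP' n x).mp hx
    obtain ⟨p, hp⟩ := hexh (n+1+1) z
    obtain ⟨w, hw, hdw⟩ := L3 n x hx1 (p - (n+1+1)).toNat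
      z (hmono _ _ _ (by omega) hp) hz
    refine ⟨w, ?_, hdw⟩
    rw [hP' (n+1)]
    exact ⟨hw, by rw [hdw]; exact hx1⟩
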